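/- arXiv:2602.15269 — 2 statements merged into one kernel-verified Lean document; each statement's English description precedes it below -/
import Mathlib

section
/- Let S be a nonempty finite index set, let B_s ≥ 0 and u_s ≥ 0 be real numbers for each s ∈ S, and let C ≥ 0. Then the optimal value of the linear program minimize Σ_{s∈S} v_s subject to B_s ≤ u_s + q_s + v_s for all s, Σ_{s∈S} q_s ≤ C, and q_s ≥ 0, v_s ≥ 0 for all s, equals max(Σ_{s∈S} max(B_s − u_s, 0) − C, 0). -/
/-- Per-day, per-downstream-unit second-stage subproblem: the optimal value of
minimizing total surge capacity `∑ v s` subject to `B s ≤ u s + q s + v s`,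
`∑ q s ≤ C`, `q, v ≥ 0` equals `max (∑ max (B s - u s) 0 - C) 0`. -/
theorem stmt0 {ι : Type*} (S : Finset ι) (hS : S.Nonempty)
    (B u : ι → ℝ) (C : ℝ)
    (hB : ∀ s ∈ S, 0 ≤ B s) (hu : ∀ s ∈ S, 0 ≤ u s) (hC : 0 ≤ C) :
    IsLeast {val : ℝ | ∃ q v : ι → ℝ,
        (∀ s ∈ S, B s ≤ u s + q s + v s) ∧
        (∑ s ∈ S, q s ≤ C) ∧
        (∀ s ∈ S, 0 ≤ q s) ∧ (∀ s ∈ S, 0 ≤ v s) ∧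
        val = ∑ s ∈ S, v s}
      (max (∑ s ∈ S, max (B s - u s) 0 - C) 0) := by
  set d : ι → ℝ := fun s => max (B s - u s) 0 with hd
  have hd0 : ∀ s, 0 ≤ d s := fun s => le_max_right _ _
  set D : ℝ := ∑ s ∈ S, d s with hD
  have hD0 : 0 ≤ D := Finset.sum_nonneg fun s _ => hd0 s
  constructor
  · by_cases h : D ≤ C
    · refine ⟨d, 0, ?_, h, fun s _ => hd0 s, fun s _ => le_refl 0, ?_⟩
      · intro s hs
        have h2 : B s - u s ≤ d s := le_max_left _ _
        simp only [Pi.zero_apply, add_zero]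
        linarith
      · have : max (D - C) 0 = 0 := max_eq_right (by linarith)
        simpa [this]
    · push_neg at h
      have hDpos : 0 < D := lt_of_le_of_lt hC h
      refine ⟨fun s => d s * (C / D), fun s => d s * ((D - C) / D), ?_, ?_, ?_, ?_, ?_⟩
      · intro s hs
        have h1 : d s * (C / D) + d s * ((D - C) / D) = d s := by
          field_simp
          ring
        have h2 : B s - u s ≤ d s := le_max_left _ _
        linarith
      · rw [← Finset.sum_mul, ← hD]
        have : D * (C / D) = C := by field_simp
        linarith
      · exact fun s _ => mul_nonneg (hd0 s) (div_nonneg hC hD0)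
      · exact fun s _ => mul_nonneg (hd0 s) (div_nonneg (by linarith) hD0)
      · rw [← Finset.sum_mul, ← hD, max_eq_left (by linarith : (0:ℝ) ≤ D - C)]
        field_simp
  · rintro val ⟨q, v, hfeas, hqC, hq0, hv0, rfl⟩
    have key : ∀ s ∈ S, d s - q s ≤ v s := by
      intro s hs
      have h1 := hfeas s hs
      have h2 := hv0 s hs
      have h3 := hq0 s hs
      simp only [hd]
      rcases le_or_gt (B s - u s) 0 with hcase | hcase
      · rw [max_eq_right hcase]; linarith
      · rw [max_eq_left hcase.le]; linarith
    have hsum : D - C ≤ ∑ s ∈ S, v s := by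
      have h1 : ∑ s ∈ S, (d s - q s) ≤ ∑ s ∈ S, v s := Finset.sum_le_sum key
      rw [Finset.sum_sub_distrib] at h1
      linarith
    have h0 : 0 ≤ ∑ s ∈ S, v s := Finset.sum_nonneg fun s hs => hv0 s hs
    exact max_le hsum h0
end

section
/- Let B and E be finite index sets and S a nonempty finite index set. For each b ∈ B let c_b ≥ 0, C_b ≥ 0 and D_{b,s} ≥ 0 (s ∈ S) be reals; for each e ∈ E let T_e ≥ 0 be a real; let A ≥ 0, O ≥ 0 and c^{ot} ≥ 0 be reals with T_e ≤ A + O for all e ∈ E. Then the optimal value of the linear program minimize Σ_{b∈B} c_b Σ_{s∈S} v_{b,s} + c^{ot} Σ_{e∈E} o_e subject to D_{b,s} ≤ q_{b,s} + v_{b,s} for all b, s; Σ_{s∈S} q_{b,s} ≤ C_b for all b; q_{b,s} ≥ 0, v_{b,s} ≥ 0; and T_e ≤ A + o_e, 0 ≤ o_e ≤ O for all e, equals Σ_{b∈B} c_b · max(Σ_{s∈S} D_{b,s} − C_b, 0) + c^{ot} Σ_{e∈E} max(T_e − A, 0). -/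
/-- Full per-scenario second-stage problem in reduced form: the optimal value of
the LP with shared-bed / surge variables `q, v` over blocks `b` and overtime
variables `o` over blocks `e` equals the closed-form expression computed by the
specialized algorithm. -/
theorem stmt8 {β ε ι : Type*} (Bset : Finset β) (Eset : Finset ε) (S : Finset ι)
    (hS : S.Nonempty)
    (c Ccap : β → ℝ) (D : β → ι → ℝ) (T : ε → ℝ) (A O cot : ℝ)
    (hc : ∀ b ∈ Bset, 0 ≤ c b) (hCcap : ∀ b ∈ Bset, 0 ≤ Ccap b)
    (hD : ∀ b ∈ Bset, ∀ s ∈ S, 0 ≤ D b s)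
    (hT : ∀ e ∈ Eset, 0 ≤ T e) (hA : 0 ≤ A) (hO : 0 ≤ O) (hcot : 0 ≤ cot)
    (hfeas : ∀ e ∈ Eset, T e ≤ A + O) :
    IsLeast {val : ℝ | ∃ (q v : β → ι → ℝ) (o : ε → ℝ),
        (∀ b ∈ Bset, ∀ s ∈ S, D b s ≤ q b s + v b s) ∧
        (∀ b ∈ Bset, ∑ s ∈ S, q b s ≤ Ccap b) ∧
        (∀ b ∈ Bset, ∀ s ∈ S, 0 ≤ q b s) ∧
        (∀ b ∈ Bset, ∀ s ∈ S, 0 ≤ v b s) ∧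
        (∀ e ∈ Eset, T e ≤ A + o e) ∧
        (∀ e ∈ Eset, 0 ≤ o e ∧ o e ≤ O) ∧
        val = ∑ b ∈ Bset, c b * ∑ s ∈ S, v b s + cot * ∑ e ∈ Eset, o e}
      (∑ b ∈ Bset, c b * max (∑ s ∈ S, D b s - Ccap b) 0 +
        cot * ∑ e ∈ Eset, max (T e - A) 0) := by
  constructor
  · -- membership: construct a feasible point attaining the value
    set q : β → ι → ℝ := fun b s =>
      if ∑ t ∈ S, D b t ≤ Ccap b then D b s
      else D b s * (Ccap b / ∑ t ∈ S, D b t) with hq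
    refine ⟨q, fun b s => D b s - q b s, fun e => max (T e - A) 0, ?_, ?_, ?_, ?_, ?_, ?_, ?_⟩
    · intro b hb s hs; simp
    · intro b hb
      by_cases h : ∑ t ∈ S, D b t ≤ Ccap b
      · simpa [hq, h] using h
      · push_neg at h
        have hpos : 0 < ∑ t ∈ S, D b t := lt_of_le_of_lt (hCcap b hb) h
        simp only [hq, if_neg (not_le_of_gt h)]
        rw [← Finset.sum_mul]
        have : (∑ i ∈ S, D b i) * (Ccap b / ∑ t ∈ S, D b t) = Ccap b := by
          field_simp
        rw [this]
    · intro b hb s hs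
      by_cases h : ∑ t ∈ S, D b t ≤ Ccap b
      · simpa [hq, h] using hD b hb s hs
      · push_neg at h
        have hpos : 0 < ∑ t ∈ S, D b t := lt_of_le_of_lt (hCcap b hb) h
        simp only [hq, if_neg (not_le_of_gt h)]
        exact mul_nonneg (hD b hb s hs) (div_nonneg (hCcap b hb) hpos.le)
    · intro b hb s hs
      by_cases h : ∑ t ∈ S, D b t ≤ Ccap b
      · simp [hq, h]
      · push_neg at h
        have hpos : 0 < ∑ t ∈ S, D b t := lt_of_le_of_lt (hCcap b hb) h
        simp only [hq, if_neg (not_le_of_gt h), sub_nonneg]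
        have hr : Ccap b / ∑ t ∈ S, D b t ≤ 1 := by
          rw [div_le_one hpos]; exact h.le
        calc D b s * (Ccap b / ∑ t ∈ S, D b t) ≤ D b s * 1 :=
              mul_le_mul_of_nonneg_left hr (hD b hb s hs)
          _ = D b s := mul_one _
    · intro e he; have := le_max_left (T e - A) 0; linarith
    · intro e he
      refine ⟨le_max_right _ _, ?_⟩
      have h1 : T e - A ≤ O := by have := hfeas e he; linarith
      exact max_le h1 hO
    · congr 1
      refine Finset.sum_congr rfl fun b hb => ?_
      congr 1
      rw [Finset.sum_sub_distrib]
      by_cases h : ∑ t ∈ S, D b t ≤ Ccap b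
      · have : max (∑ t ∈ S, D b t - Ccap b) 0 = 0 := max_eq_right (by linarith)
        simp [hq, h, this]
      · push_neg at h
        have hpos : 0 < ∑ t ∈ S, D b t := lt_of_le_of_lt (hCcap b hb) h
        have : max (∑ t ∈ S, D b t - Ccap b) 0 = ∑ t ∈ S, D b t - Ccap b :=
          max_eq_left (by linarith)
        rw [this]
        simp only [hq, if_neg (not_le_of_gt h)]
        rw [← Finset.sum_mul]
        have : (∑ i ∈ S, D b i) * (Ccap b / ∑ t ∈ S, D b t) = Ccap b := by
          field_simp
        rw [this]
  · -- lower bound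
    rintro val ⟨q, v, o, h1, h2, h3, h4, h5, h6, rfl⟩
    have hb1 : ∀ b ∈ Bset, c b * max (∑ s ∈ S, D b s - Ccap b) 0 ≤ c b * ∑ s ∈ S, v b s := by
      intro b hb
      refine mul_le_mul_of_nonneg_left ?_ (hc b hb)
      refine max_le ?_ (Finset.sum_nonneg fun s hs => h4 b hb s hs)
      have hDq : ∑ s ∈ S, D b s ≤ ∑ s ∈ S, (q b s + v b s) :=
        Finset.sum_le_sum fun s hs => h1 b hb s hs
      rw [Finset.sum_add_distrib] at hDq
      have := h2 b hb
      linarith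
    have he1 : ∀ e ∈ Eset, max (T e - A) 0 ≤ o e := by
      intro e he
      exact max_le (by have := h5 e he; linarith) (h6 e he).1
    have t1 : ∑ b ∈ Bset, c b * max (∑ s ∈ S, D b s - Ccap b) 0 ≤
        ∑ b ∈ Bset, c b * ∑ s ∈ S, v b s := Finset.sum_le_sum hb1
    have t2 : cot * ∑ e ∈ Eset, max (T e - A) 0 ≤ cot * ∑ e ∈ Eset, o e :=
      mul_le_mul_of_nonneg_left (Finset.sum_le_sum he1) hcot
    linarith
end
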